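/- arXiv:2305.18581 — 2 statements merged into one kernel-verified Lean document; each statement's English description precedes it below -/
import Mathlib

section
/- Let A = rng(a) and V = rng(v) be infinite c.e. sets with a, v injective computable functions, and suppose A is not computable. Then the c.e. set A^V = {v(s) : ∃t > s, a(t) < v(s)} is infinite. -/
open Classical in
/-- Characteristic function of a set of naturals. -/
noncomputable def chi (A : Set ℕ) : ℕ → ℕ := fun n => if n ∈ A then 1 else 0

/-- Partial functions computable relative to an oracle `O : ℕ → ℕ`. -/
inductive RecursiveInFn (O : ℕ → ℕ) : (ℕ →. ℕ) → Prop
  | zero : RecursiveInFn O (pure 0)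
  | succ : RecursiveInFn O Nat.succ
  | left : RecursiveInFn O ↑fun n : ℕ => n.unpair.1
  | right : RecursiveInFn O ↑fun n : ℕ => n.unpair.2
  | oracle : RecursiveInFn O ↑O
  | pair {f g} : RecursiveInFn O f → RecursiveInFn O g →
      RecursiveInFn O fun n => Nat.pair <$> f n <*> g n
  | comp {f g} : RecursiveInFn O f → RecursiveInFn O g →
      RecursiveInFn O fun n => g n >>= f
  | prec {f g} : RecursiveInFn O f → RecursiveInFn O g →
      RecursiveInFn O (Nat.unpaired fun a n =>
        n.rec (f a) fun y IH => do let i ← IH; g (Nat.pair a (Nat.pair y i)))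
  | rfind {f} : RecursiveInFn O f →
      RecursiveInFn O fun a => Nat.rfind fun n => (fun m => m = 0) <$> f (Nat.pair a n)

/-- Turing reducibility between sets of naturals: `A ≤_T B`. -/
def SetTuringRed (A B : Set ℕ) : Prop := RecursiveInFn (chi B) ↑(chi A)

/-- `A` is computably enumerable. -/
def CE (A : Set ℕ) : Prop := ∃ f : ℕ →. ℕ, Nat.Partrec f ∧ ∀ n, n ∈ A ↔ (f n).Dom

/-- `A` is c.e. relative to the oracle `O`. -/
def CEIn (O : ℕ → ℕ) (A : Set ℕ) : Prop :=
  ∃ f : ℕ →. ℕ, RecursiveInFn O f ∧ ∀ n, n ∈ A ↔ (f n).Dom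

/-- A uniformly c.e. sequence of sets. -/
def UnifCE (A : ℕ → Set ℕ) : Prop :=
  ∃ f : ℕ →. ℕ, Nat.Partrec f ∧ ∀ i x, x ∈ A i ↔ (f (Nat.pair i x)).Dom

/-- The Dekker-style subset `A^V` built from enumerations `a` of `A` and `v` of `V`. -/
def DekkerOp (a v : ℕ → ℕ) : Set ℕ := {n | ∃ s, n = v s ∧ ∃ t > s, a t < v s}

theorem stmt2 (a v : ℕ → ℕ) (ha : Computable a) (hv : Computable v)
    (hainj : Function.Injective a) (hvinj : Function.Injective v)
    (hAinf : (Set.range a).Infinite) (hVinf : (Set.range v).Infinite)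
    (hAnc : ¬ComputablePred (· ∈ Set.range a)) :
    (DekkerOp a v).Infinite := by
  by_contra hfin
  rw [Set.not_infinite] at hfin
  -- the set of stages s contributing to A^V is finite
  have hS : {s | ∃ t > s, a t < v s}.Finite := by
    apply Set.Finite.of_finite_image (f := v) ?_ (hvinj.injOn)
    apply hfin.subset
    rintro x ⟨s, hs, rfl⟩
    exact ⟨s, rfl, hs⟩
  obtain ⟨s1, hs1⟩ := hS.bddAbove
  set s0 := s1 + 1 with hs0def
  have hs0 : ∀ s, s0 ≤ s → ∀ t > s, v s ≤ a t := by
    intro s hs t ht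
    by_contra hlt
    have : s ≤ s1 := hs1 ⟨t, ht, not_le.1 hlt⟩
    omega
  -- the decision predicate
  set B : ℕ × ℕ → Bool :=
    fun p => bif decide (a p.2 = p.1) then true
      else bif decide (s0 ≤ p.2) then decide (p.1 < v p.2) else false with hBdef
  have hB : Computable B := by
    apply Computable.cond
    · exact Primrec.eq.decide.to_comp.comp (ha.comp Computable.snd) Computable.fst
    · exact Computable.const true
    · apply Computable.cond
      · exact Primrec.nat_le.decide.to_comp.comp (Computable.const s0) Computable.snd
      · exact Primrec.nat_lt.decide.to_comp.comp Computable.fst (hv.comp Computable.snd)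
      · exact Computable.const false
  have hBor : ∀ p, B p = true ↔ (a p.2 = p.1 ∨ (s0 ≤ p.2 ∧ p.1 < v p.2)) := by
    intro p
    by_cases h1 : a p.2 = p.1 <;> by_cases h2 : s0 ≤ p.2 <;>
      simp [hBdef, Bool.cond_eq_ite, h1, h2]
  set Q : ℕ → ℕ →. Bool := fun n s => Part.some (B (n, s)) with hQdef
  have hQ : Partrec₂ Q := (hB.comp (Computable.id (α := ℕ × ℕ))).partrec
  have hF : Partrec fun n => (Nat.rfind (Q n)).map fun s => decide (a s = n) :=
    (Partrec.rfind hQ).map (Primrec.eq.decide.to_comp.comp (ha.comp Computable.snd) Computable.fst)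
  classical
  have hmem : ∀ n, (decide (n ∈ Set.range a)) ∈
      (Nat.rfind (Q n)).map fun s => decide (a s = n) := by
    intro n
    -- there is a witness for the rfind
    obtain ⟨m, ⟨s, hs, rfl⟩, hm⟩ :=
      (((Set.Ici_infinite s0).image (hvinj.injOn)).exists_gt n)
    have hw : B (n, s) = true := (hBor _).2 (Or.inr ⟨hs, hm⟩)
    obtain ⟨k, hk, _⟩ := Nat.rfind_min' (p := fun s => B (n, s)) hw
    refine (Part.mem_map_iff _).2 ⟨k, hk, ?_⟩
    have hspec := (hBor (n, k)).1 (by simpa using Nat.rfind_spec hk)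
    have hmin : ∀ m < k, B (n, m) = false := by
      intro m hmk
      simpa using Nat.rfind_min hk hmk
    by_cases hak : a k = n
    · have : n ∈ Set.range a := ⟨k, hak⟩
      simp [hak, this]
    · have h23 : s0 ≤ k ∧ n < v k := by
        rcases hspec with h | h
        · exact absurd h hak
        · exact h
      have hnot : n ∉ Set.range a := by
        rintro ⟨t, hat⟩
        have hBt : B (n, t) = true := (hBor _).2 (Or.inl hat)
        have htk : ¬ t < k := fun hlt => by simp [hmin t hlt] at hBt
        rcases Nat.lt_or_ge k t with hkt | hkt
        · have := hs0 k h23.1 t hkt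
          omega
        · have : t = k := by omega
          exact hak (this ▸ hat)
      simp [hak, hnot]
  have hcomp : Computable fun n => decide (n ∈ Set.range a) := hF.of_eq_tot hmem
  exact hAnc (ComputablePred.computable_iff.2
    ⟨_, hcomp, funext fun n => by simp⟩)
end

section
/- Let E be a c.e. set and F = W_e^E an E-c.e. set admitting a computable approximation F(x) = lim_s F_s(x), F_s(x) ∈ {0,1}, with F_0(x) = 1, F_1(x) = 0, satisfying: for all x < y < s < t, if F_s(x) ≠ F_{s+1}(x) then F_s(y) = F_t(y). Define F̃ = {⟨y,t⟩ : F_t(y) = F(y) = 1, F_{t+1}(y) = 0}, Ũ = {⟨y,t⟩ : ∃x ∃s (x < y < s ∧ F_s(x) ≠ F_{s+1}(x) ∧ F_s(y) = F_t(y) = 1) ∧ F_{t+1}(y) = 0}, and Ṽ = {⟨y,t⟩ : ∃s > t (F_s(y) = F_t(y) = 1) ∧ F_{t+1}(y) = 0}. Then Ũ and Ṽ are c.e., Ũ ⊆ F̃ ⊆ Ṽ, and for every set Z with Ũ ⊆ Z ⊆ Ṽ, F ≤_T E ⊕ Z. -/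
/-- The effective join of two sets of naturals. -/
def join (A B : Set ℕ) : Set ℕ :=
  {n | (∃ m ∈ A, n = 2 * m) ∨ (∃ m ∈ B, n = 2 * m + 1)}
namespace S7

theorem part_some_bind_pfun (a : ℕ) (g : ℕ →. ℕ) : (Part.some a >>= g : Part ℕ) = g a :=
  Part.bind_some a g

theorem comp_deq : Computable₂ (fun a b : ℕ => decide (a = b)) := Primrec.eq.decide.to_comp
theorem comp_dlt : Computable₂ (fun a b : ℕ => decide (a < b)) := Primrec.nat_lt.decide.to_comp
theorem comp_and : Computable₂ and := Primrec.and.to_comp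
theorem comp_or : Computable₂ or := Primrec.or.to_comp
theorem comp_not : Computable not := Primrec.not.to_comp

/-- generic CE producer -/
theorem ce_of_exists {p : ℕ → ℕ → Bool} (hp : Computable₂ p) :
    CE {m | ∃ k, p m k = true} := by
  refine ⟨fun m => Nat.rfind fun k => Part.some (p m k), ?_, ?_⟩
  · have h1 : Partrec fun m => Nat.rfind fun k => (p m k : Part Bool) :=
      Partrec.rfind hp.partrec₂
    exact Partrec.nat_iff.1 h1
  · intro n
    erw [Nat.rfind_dom]
    constructor
    · rintro ⟨k, hk⟩
      exact ⟨k, by simpa using hk, fun {m} _ => trivial⟩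
    · rintro ⟨k, hk, -⟩
      exact ⟨k, by simpa using hk⟩

end S7
namespace S7

section FaParts
variable {Fa : ℕ → ℕ → ℕ}

private def pU (Fa : ℕ → ℕ → ℕ) : ℕ → ℕ → Bool := fun m k =>
  decide (k.unpair.1 < m.unpair.1) && decide (m.unpair.1 < k.unpair.2) &&
  !(decide (Fa k.unpair.2 k.unpair.1 = Fa (k.unpair.2 + 1) k.unpair.1)) &&
  decide (Fa k.unpair.2 m.unpair.1 = 1) && decide (Fa m.unpair.2 m.unpair.1 = 1) &&
  decide (Fa (m.unpair.2 + 1) m.unpair.1 = 0)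

private def pV (Fa : ℕ → ℕ → ℕ) : ℕ → ℕ → Bool := fun m k =>
  decide (m.unpair.2 < k) && decide (Fa k m.unpair.1 = 1) && decide (Fa m.unpair.2 m.unpair.1 = 1) &&
  decide (Fa (m.unpair.2 + 1) m.unpair.1 = 0)

theorem computable_pU (hcomp : Computable fun p : ℕ × ℕ => Fa p.1 p.2) :
    Computable₂ (pU Fa) := by
  have cFa : Computable₂ Fa := hcomp
  have cy : Computable fun q : ℕ × ℕ => q.1.unpair.1 :=
    (Computable.fst.comp Computable.unpair).comp Computable.fst
  have ct : Computable fun q : ℕ × ℕ => q.1.unpair.2 :=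
    (Computable.snd.comp Computable.unpair).comp Computable.fst
  have cx : Computable fun q : ℕ × ℕ => q.2.unpair.1 :=
    (Computable.fst.comp Computable.unpair).comp Computable.snd
  have cs : Computable fun q : ℕ × ℕ => q.2.unpair.2 :=
    (Computable.snd.comp Computable.unpair).comp Computable.snd
  have cs1 : Computable fun q : ℕ × ℕ => q.2.unpair.2 + 1 := Computable.succ.comp cs
  have ct1 : Computable fun q : ℕ × ℕ => q.1.unpair.2 + 1 := Computable.succ.comp ct
  exact comp_and.comp
    (comp_and.comp
      (comp_and.comp
        (comp_and.comp (comp_and.comp (comp_dlt.comp cx cy) (comp_dlt.comp cy cs))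
          (comp_not.comp (comp_deq.comp (cFa.comp cs cx) (cFa.comp cs1 cx))))
        (comp_deq.comp (cFa.comp cs cy) (Computable.const 1)))
      (comp_deq.comp (cFa.comp ct cy) (Computable.const 1)))
    (comp_deq.comp (cFa.comp ct1 cy) (Computable.const 0))

theorem computable_pV (hcomp : Computable fun p : ℕ × ℕ => Fa p.1 p.2) :
    Computable₂ (pV Fa) := by
  have cFa : Computable₂ Fa := hcomp
  have cy : Computable fun q : ℕ × ℕ => q.1.unpair.1 :=
    (Computable.fst.comp Computable.unpair).comp Computable.fst
  have ct : Computable fun q : ℕ × ℕ => q.1.unpair.2 :=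
    (Computable.snd.comp Computable.unpair).comp Computable.fst
  have ck : Computable fun q : ℕ × ℕ => q.2 := Computable.snd
  have ct1 : Computable fun q : ℕ × ℕ => q.1.unpair.2 + 1 := Computable.succ.comp ct
  exact comp_and.comp
    (comp_and.comp (comp_and.comp (comp_dlt.comp ct ck)
        (comp_deq.comp (cFa.comp ck cy) (Computable.const 1)))
      (comp_deq.comp (cFa.comp ct cy) (Computable.const 1)))
    (comp_deq.comp (cFa.comp ct1 cy) (Computable.const 0))

theorem ce_Ut (hcomp : Computable fun p : ℕ × ℕ => Fa p.1 p.2) (Ut : Set ℕ)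
    (hUt : Ut = {m : ℕ | ∃ y t, m = Nat.pair y t ∧
      (∃ x s, x < y ∧ y < s ∧ Fa s x ≠ Fa (s + 1) x ∧ Fa s y = 1 ∧ Fa t y = 1) ∧
      Fa (t + 1) y = 0}) : CE Ut := by
  have h := ce_of_exists (computable_pU hcomp)
  have e : Ut = {m | ∃ k, pU Fa m k = true} := by
    rw [hUt]; ext m
    simp only [Set.mem_setOf_eq, pU, Bool.and_eq_true, decide_eq_true_eq,
      Bool.not_eq_true', decide_eq_false_iff_not]
    constructor
    · rintro ⟨y, t, rfl, ⟨x, s, h1, h2, h3, h4, h5⟩, h6⟩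
      exact ⟨Nat.pair x s, by simp [Nat.unpair_pair]; tauto⟩
    · rintro ⟨k, ⟨⟨⟨⟨h1, h2⟩, h3⟩, h4⟩, h5⟩, h6⟩
      exact ⟨m.unpair.1, m.unpair.2, (Nat.pair_unpair m).symm,
        ⟨k.unpair.1, k.unpair.2, h1, h2, h3, h4, h5⟩, h6⟩
  rw [e]; exact h

theorem ce_Vt (hcomp : Computable fun p : ℕ × ℕ => Fa p.1 p.2) (Vt : Set ℕ)
    (hVt : Vt = {m : ℕ | ∃ y t, m = Nat.pair y t ∧
      (∃ s > t, Fa s y = 1 ∧ Fa t y = 1) ∧ Fa (t + 1) y = 0}) : CE Vt := by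
  have h := ce_of_exists (computable_pV hcomp)
  have e : Vt = {m | ∃ k, pV Fa m k = true} := by
    rw [hVt]; ext m
    simp only [Set.mem_setOf_eq, pV, Bool.and_eq_true, decide_eq_true_eq]
    constructor
    · rintro ⟨y, t, rfl, ⟨s, hs, h1, h2⟩, h3⟩
      exact ⟨s, by simp [Nat.unpair_pair]; tauto⟩
    · rintro ⟨k, ⟨⟨h1, h2⟩, h3⟩, h4⟩
      exact ⟨m.unpair.1, m.unpair.2, (Nat.pair_unpair m).symm, ⟨k, h1, h2, h3⟩, h4⟩
  rw [e]; exact h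

/-- freezing: once a smaller element flips after y, y's value equals its limit -/
theorem freeze {F : ℕ → ℕ} (hlim : ∀ x, ∃ N, ∀ s ≥ N, Fa s x = F x)
    (hmon : ∀ x y s t, x < y → y < s → s < t → Fa s x ≠ Fa (s + 1) x → Fa s y = Fa t y)
    {x y s : ℕ} (hxy : x < y) (hys : y < s) (hflip : Fa s x ≠ Fa (s + 1) x) :
    Fa s y = F y := by
  obtain ⟨N, hN⟩ := hlim y
  have h := hmon x y s (max N (s + 1)) hxy hys
    (lt_of_lt_of_le (Nat.lt_succ_self s) (le_max_right _ _)) hflip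
  rw [h, hN _ (le_max_left _ _)]

theorem Ut_sub_Ft {F : ℕ → ℕ} (hlim : ∀ x, ∃ N, ∀ s ≥ N, Fa s x = F x)
    (hmon : ∀ x y s t, x < y → y < s → s < t → Fa s x ≠ Fa (s + 1) x → Fa s y = Fa t y)
    (Ft Ut : Set ℕ)
    (hFt : Ft = {m : ℕ | ∃ y t, m = Nat.pair y t ∧ Fa t y = 1 ∧ F y = 1 ∧ Fa (t + 1) y = 0})
    (hUt : Ut = {m : ℕ | ∃ y t, m = Nat.pair y t ∧
      (∃ x s, x < y ∧ y < s ∧ Fa s x ≠ Fa (s + 1) x ∧ Fa s y = 1 ∧ Fa t y = 1) ∧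
      Fa (t + 1) y = 0}) : Ut ⊆ Ft := by
  rw [hFt, hUt]
  rintro m ⟨y, t, rfl, ⟨x, s, h1, h2, h3, h4, h5⟩, h6⟩
  refine ⟨y, t, rfl, h5, ?_, h6⟩
  rw [← freeze hlim hmon h1 h2 h3]; exact h4

theorem Ft_sub_Vt {F : ℕ → ℕ} (hlim : ∀ x, ∃ N, ∀ s ≥ N, Fa s x = F x)
    (Ft Vt : Set ℕ)
    (hFt : Ft = {m : ℕ | ∃ y t, m = Nat.pair y t ∧ Fa t y = 1 ∧ F y = 1 ∧ Fa (t + 1) y = 0})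
    (hVt : Vt = {m : ℕ | ∃ y t, m = Nat.pair y t ∧
      (∃ s > t, Fa s y = 1 ∧ Fa t y = 1) ∧ Fa (t + 1) y = 0}) : Ft ⊆ Vt := by
  rw [hFt, hVt]
  rintro m ⟨y, t, rfl, h1, h2, h3⟩
  obtain ⟨N, hN⟩ := hlim y
  refine ⟨y, t, rfl, ⟨max N (t + 1), lt_of_lt_of_le (Nat.lt_succ_self t) (le_max_right _ _),
    ?_, h1⟩, h3⟩
  rw [hN _ (le_max_left _ _)]; exact h2

end FaParts
end S7
namespace S7
section RecIn
variable {O O' : ℕ → ℕ}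

theorem recIn_of_natPartrec {f : ℕ →. ℕ} (h : Nat.Partrec f) : RecursiveInFn O f := by
  induction h with
  | zero => exact .zero
  | succ => exact .succ
  | left => exact .left
  | right => exact .right
  | pair _ _ ih₁ ih₂ => exact .pair ih₁ ih₂
  | comp _ _ ih₁ ih₂ => exact .comp ih₁ ih₂
  | prec _ _ ih₁ ih₂ => exact .prec ih₁ ih₂
  | rfind _ ih => exact .rfind ih

theorem recIn_of_partrec {f : ℕ →. ℕ} (h : Partrec f) : RecursiveInFn O f :=
  recIn_of_natPartrec (Partrec.nat_iff.1 h)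

theorem recIn_of_computable {f : ℕ → ℕ} (h : Computable f) : RecursiveInFn O ↑f :=
  recIn_of_partrec h.partrec

theorem recIn_of_eq {f g : ℕ →. ℕ} (h : RecursiveInFn O f) (e : ∀ n, f n = g n) :
    RecursiveInFn O g := (funext e : f = g) ▸ h

theorem recIn_totalComp {f g : ℕ → ℕ} (hf : RecursiveInFn O ↑f) (hg : RecursiveInFn O ↑g) :
    RecursiveInFn O ↑(fun n => f (g n)) := by
  refine recIn_of_eq (RecursiveInFn.comp hf hg) fun n => ?_
  simp [PFun.coe_val, Part.bind_some]
  exact part_some_bind_pfun (g n) (f : ℕ →. ℕ)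

theorem recIn_totalPair {f g : ℕ → ℕ} (hf : RecursiveInFn O ↑f) (hg : RecursiveInFn O ↑g) :
    RecursiveInFn O ↑(fun n => Nat.pair (f n) (g n)) := by
  refine recIn_of_eq (RecursiveInFn.pair hf hg) fun n => ?_
  simp [PFun.coe_val, Part.bind_some, Seq.seq]

theorem recIn_trans {f : ℕ →. ℕ} (h : RecursiveInFn O' f) (hO' : RecursiveInFn O ↑O') :
    RecursiveInFn O f := by
  induction h with
  | zero => exact .zero
  | succ => exact .succ
  | left => exact .left
  | right => exact .right
  | oracle => exact hO'
  | pair _ _ ih₁ ih₂ => exact .pair ih₁ ih₂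
  | comp _ _ ih₁ ih₂ => exact .comp ih₁ ih₂
  | prec _ _ ih₁ ih₂ => exact .prec ih₁ ih₂
  | rfind _ ih => exact .rfind ih

/-- the oracle's table of length `k`, as an encoded list -/
def tabf (O : ℕ → ℕ) : ℕ → ℕ := fun k => Encodable.encode ((List.range k).map O)

theorem recIn_tabf : RecursiveInFn O ↑(tabf O) := by
  classical
  -- plain part of the step function
  have hG : Computable (fun q : ℕ =>
      Encodable.encode ((Denumerable.ofNat (List ℕ) q.unpair.1.unpair.2.unpair.2) ++
        [q.unpair.2])) := by
    have c1 : Computable fun q : ℕ => q.unpair.1.unpair.2.unpair.2 :=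
      (Computable.snd.comp Computable.unpair).comp
        ((Computable.snd.comp Computable.unpair).comp
          (Computable.fst.comp Computable.unpair))
    have c2 : Computable fun q : ℕ => q.unpair.2 := Computable.snd.comp Computable.unpair
    exact Computable.encode.comp
      (Computable.list_concat.comp ((Computable.ofNat (List ℕ)).comp c1) c2)
  have hInner : RecursiveInFn O ↑(fun m : ℕ => Nat.pair m (O m.unpair.2.unpair.1)) := by
    have hproj : Computable fun m : ℕ => m.unpair.2.unpair.1 :=
      (Computable.fst.comp Computable.unpair).comp (Computable.snd.comp Computable.unpair)
    exact recIn_totalPair (recIn_of_computable Computable.id)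
      (recIn_totalComp .oracle (recIn_of_computable hproj))
  have hstep : RecursiveInFn O ↑(fun m : ℕ =>
      Encodable.encode ((Denumerable.ofNat (List ℕ) ((Nat.pair m (O m.unpair.2.unpair.1)).unpair.1.unpair.2.unpair.2)) ++
        [(Nat.pair m (O m.unpair.2.unpair.1)).unpair.2])) :=
    recIn_totalComp (recIn_of_computable hG) hInner
  have hbase : RecursiveInFn O ↑(fun _ : ℕ => Encodable.encode ([] : List ℕ)) :=
    recIn_of_computable (Computable.const _)
  have hp := RecursiveInFn.prec hbase hstep
  have key : ∀ k a : ℕ, (Nat.unpaired fun a n =>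
      n.rec ((↑(fun _ : ℕ => Encodable.encode ([] : List ℕ)) : ℕ →. ℕ) a)
        fun y IH => do
          let i ← IH
          (↑(fun m : ℕ =>
      Encodable.encode ((Denumerable.ofNat (List ℕ) ((Nat.pair m (O m.unpair.2.unpair.1)).unpair.1.unpair.2.unpair.2)) ++
        [(Nat.pair m (O m.unpair.2.unpair.1)).unpair.2])) : ℕ →. ℕ) (Nat.pair a (Nat.pair y i)))
      (Nat.pair a k) = Part.some (tabf O k) := by
    intro k a
    induction k with
    | zero =>
      simp [Nat.unpaired, Nat.unpair_pair, tabf, PFun.coe_val]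
    | succ k ih =>
      simp only [Nat.unpaired, Nat.unpair_pair, PFun.coe_val, Part.bind_eq_bind] at ih ⊢
      rw [ih, Part.bind_some]
      simp only [Nat.unpair_pair, tabf, Denumerable.ofNat_encode, Part.some_inj]
      rw [List.range_succ, List.map_append]
      rfl
  have final := RecursiveInFn.comp hp (recIn_of_computable
    (show Computable fun k : ℕ => Nat.pair 0 k from
      (Computable₂.comp Primrec₂.natPair.to_comp (Computable.const 0) Computable.id)))
  refine recIn_of_eq final fun k => ?_
  have h1 : (↑(fun k : ℕ => Nat.pair 0 k) : ℕ →. ℕ) k = Part.some (Nat.pair 0 k) := rfl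
  rw [h1, Part.bind_eq_bind, Part.bind_some]
  exact key k 0

end RecIn
end S7
namespace S7

inductive codeo : Type
  | zero | succ | left | right | oracle
  | pair (a b : codeo) | comp (a b : codeo) | prec (a b : codeo) | rfind (a : codeo)

def evalo (O : ℕ → ℕ) : codeo → ℕ →. ℕ
  | .zero => pure 0
  | .succ => ↑Nat.succ
  | .left => ↑fun n : ℕ => n.unpair.1
  | .right => ↑fun n : ℕ => n.unpair.2
  | .oracle => ↑O
  | .pair cf cg => fun n => Nat.pair <$> evalo O cf n <*> evalo O cg n
  | .comp cf cg => fun n => evalo O cg n >>= evalo O cf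
  | .prec cf cg => Nat.unpaired fun a n =>
      n.rec (evalo O cf a) fun y IH => do let i ← IH; evalo O cg (Nat.pair a (Nat.pair y i))
  | .rfind cf => fun a => Nat.rfind fun n => (fun m => m = 0) <$> evalo O cf (Nat.pair a n)

theorem exists_code {O : ℕ → ℕ} {f : ℕ →. ℕ} (h : RecursiveInFn O f) :
    ∃ c : codeo, evalo O c = f := by
  induction h with
  | zero => exact ⟨.zero, rfl⟩
  | succ => exact ⟨.succ, rfl⟩
  | left => exact ⟨.left, rfl⟩
  | right => exact ⟨.right, rfl⟩
  | oracle => exact ⟨.oracle, rfl⟩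
  | pair _ _ ih₁ ih₂ =>
    obtain ⟨cf, rfl⟩ := ih₁; obtain ⟨cg, rfl⟩ := ih₂; exact ⟨.pair cf cg, rfl⟩
  | comp _ _ ih₁ ih₂ =>
    obtain ⟨cf, rfl⟩ := ih₁; obtain ⟨cg, rfl⟩ := ih₂; exact ⟨.comp cf cg, rfl⟩
  | prec _ _ ih₁ ih₂ =>
    obtain ⟨cf, rfl⟩ := ih₁; obtain ⟨cg, rfl⟩ := ih₂; exact ⟨.prec cf cg, rfl⟩
  | rfind _ ih =>
    obtain ⟨cf, rfl⟩ := ih; exact ⟨.rfind cf, rfl⟩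

/-- least witness below a bound (sentinel: the bound itself) -/
def lwB (p : ℕ → Bool) : ℕ → ℕ
  | 0 => 0
  | n + 1 => if lwB p n < n then lwB p n else if p n then n else n + 1

theorem lwB_correct (p : ℕ → Bool) :
    ∀ k, (lwB p k < k ∧ p (lwB p k) = true ∧ ∀ i < lwB p k, p i = false) ∨
      (lwB p k = k ∧ ∀ i < k, p i = false) := by
  intro k
  induction k with
  | zero => exact Or.inr ⟨rfl, fun i h => absurd h (Nat.not_lt_zero i)⟩
  | succ k ih =>
    rcases ih with ⟨h1, h2, h3⟩ | ⟨h1, h2⟩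
    · left
      rw [lwB, if_pos h1]
      exact ⟨Nat.lt_succ_of_lt h1, h2, h3⟩
    · rw [lwB, if_neg (by omega)]
      by_cases hp : p k = true
      · rw [if_pos hp]
        exact Or.inl ⟨Nat.lt_succ_self k, hp, h2⟩
      · rw [if_neg hp]
        refine Or.inr ⟨rfl, fun i hi => ?_⟩
        rcases Nat.lt_succ_iff_lt_or_eq.1 hi with h | h
        · exact h2 i h
        · subst h; simpa using hp

theorem lwB_lt_iff {p : ℕ → Bool} {k : ℕ} : lwB p k < k ↔ ∃ i < k, p i = true := by
  rcases lwB_correct p k with ⟨h1, h2, _⟩ | ⟨h1, h2⟩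
  · exact ⟨fun _ => ⟨_, h1, h2⟩, fun _ => h1⟩
  · constructor
    · intro h; omega
    · rintro ⟨i, hik, hpi⟩; rw [h2 i hik] at hpi; cases hpi

theorem lwB_spec {p : ℕ → Bool} {k : ℕ} (h : lwB p k < k) : p (lwB p k) = true := by
  rcases lwB_correct p k with ⟨_, h2, _⟩ | ⟨h1, _⟩
  · exact h2
  · omega

theorem lwB_min {p : ℕ → Bool} {k : ℕ} (h : lwB p k < k) : ∀ i < lwB p k, p i = false := by
  rcases lwB_correct p k with ⟨_, _, h3⟩ | ⟨h1, _⟩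
  · exact h3
  · omega

theorem lwB_eq_of {p : ℕ → Bool} {k r : ℕ} (hrk : r < k) (hr : p r = true)
    (hmin : ∀ i < r, p i = false) : lwB p k = r := by
  have hlt : lwB p k < k := lwB_lt_iff.2 ⟨r, hrk, hr⟩
  have h1 := lwB_spec hlt
  have h2 := lwB_min hlt
  rcases lt_trichotomy (lwB p k) r with h | h | h
  · rw [hmin _ h] at h1; cases h1
  · exact h
  · rw [h2 _ h] at hr; cases hr

theorem computable_lwB {α : Type} [Primcodable α] {p : α → ℕ → Bool}
    (hp : Computable₂ p) : Computable₂ fun a k => lwB (p a) k := by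
  have hh : Computable₂ fun (q : α × ℕ) (r : ℕ × ℕ) =>
      if r.2 < r.1 then r.2 else if p q.1 r.1 then r.1 else r.1 + 1 := by
    have hc1 : Computable fun z : (α × ℕ) × ℕ × ℕ => decide (z.2.2 < z.2.1) :=
      comp_dlt.comp (Computable.snd.comp Computable.snd) (Computable.fst.comp Computable.snd)
    have hc2 : Computable fun z : (α × ℕ) × ℕ × ℕ => p z.1.1 z.2.1 :=
      hp.comp (Computable.fst.comp Computable.fst) (Computable.fst.comp Computable.snd)
    have := Computable.cond hc1 (Computable.snd.comp Computable.snd)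
      (Computable.cond hc2 (Computable.fst.comp Computable.snd)
        (Computable.succ.comp (Computable.fst.comp Computable.snd)))
    refine this.of_eq fun z => ?_
    by_cases h1 : z.2.2 < z.2.1 <;> by_cases h2 : p z.1.1 z.2.1 <;> simp [h1, h2]
  have := Computable.nat_rec (f := fun q : α × ℕ => q.2) (g := fun _ : α × ℕ => 0)
    Computable.snd (Computable.const 0) hh
  refine this.of_eq fun q => ?_
  obtain ⟨a, k⟩ := q
  simp only
  induction k with
  | zero => rfl
  | succ k ih => simp only [lwB, ← ih]

end S7
namespace S7

theorem lwB_le (p : ℕ → Bool) (k : ℕ) : lwB p k ≤ k := by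
  rcases lwB_correct p k with ⟨h, _, _⟩ | ⟨h, _⟩ <;> omega

theorem lwB_eq_self {p : ℕ → Bool} {k : ℕ} (h : ∀ i < k, p i = false) : lwB p k = k := by
  rcases lwB_correct p k with ⟨h1, h2, _⟩ | ⟨h1, _⟩
  · rw [h _ h1] at h2; cases h2
  · exact h1

def evln (k : ℕ) (L : List ℕ) : codeo → ℕ → Option ℕ
  | .zero, _ => some 0
  | .succ, n => some (n + 1)
  | .left, n => some n.unpair.1
  | .right, n => some n.unpair.2
  | .oracle, n => L[n]?
  | .pair cf cg, n => (evln k L cf n).bind fun x => (evln k L cg n).map fun y => Nat.pair x y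
  | .comp cf cg, n => (evln k L cg n).bind fun x => evln k L cf x
  | .prec cf cg, n =>
      n.unpair.2.rec (evln k L cf n.unpair.1) fun y IH =>
        IH.bind fun i => evln k L cg (Nat.pair n.unpair.1 (Nat.pair y i))
  | .rfind cf, n =>
      if lwB (fun m => decide (evln k L cf (Nat.pair n m) = some 0)) k < k ∧
         lwB (fun i => !(evln k L cf (Nat.pair n i)).isSome)
           (lwB (fun m => decide (evln k L cf (Nat.pair n m) = some 0)) k) =
           lwB (fun m => decide (evln k L cf (Nat.pair n m) = some 0)) k
      then some (lwB (fun m => decide (evln k L cf (Nat.pair n m) = some 0)) k) else none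

theorem evln_rfind_iff {k : ℕ} {L : List ℕ} {cf : codeo} {n r : ℕ} :
    evln k L (.rfind cf) n = some r ↔
      r < k ∧ evln k L cf (Nat.pair n r) = some 0 ∧
        ∀ i < r, ∃ v, evln k L cf (Nat.pair n i) = some v ∧ v ≠ 0 := by
  rw [evln]
  set p : ℕ → Bool := fun m => decide (evln k L cf (Nat.pair n m) = some 0) with hp
  set q : ℕ → Bool := fun i => !(evln k L cf (Nat.pair n i)).isSome with hq
  constructor
  · intro h
    split_ifs at h with hc
    · obtain ⟨hc1, hc2⟩ := hc
      obtain rfl : lwB p k = r := by injection h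
      refine ⟨hc1, by simpa [hp] using lwB_spec hc1, fun i hi => ?_⟩
      have hqi : q i = false := by
        by_contra hqi'
        have hlt : lwB q (lwB p k) < lwB p k := lwB_lt_iff.2 ⟨i, hi, by simpa using hqi'⟩
        omega
      have hpi : p i = false := lwB_min hc1 i hi
      rw [hq] at hqi
      simp only [Bool.not_eq_false', Option.isSome_iff_exists] at hqi
      obtain ⟨v, hv⟩ := hqi
      refine ⟨v, hv, fun h0 => absurd hpi (by simp [hp, hv, h0])⟩
  · rintro ⟨h1, h2, h3⟩
    have hlw : lwB p k = r := by
      refine lwB_eq_of h1 (by simp [hp, h2]) fun i hi => ?_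
      obtain ⟨v, hv, hv0⟩ := h3 i hi
      simp [hp, hv, hv0]
    have hq' : ∀ i < r, q i = false := by
      intro i hi
      obtain ⟨v, hv, _⟩ := h3 i hi
      simp [hq, hv]
    have hcond : lwB p k < k ∧ lwB q (lwB p k) = lwB p k := by
      refine ⟨by omega, ?_⟩
      rw [hlw]
      exact lwB_eq_self hq'
    rw [if_pos hcond, hlw]

theorem evln_mono {k k' : ℕ} {L L' : List ℕ} (hk : k ≤ k')
    (hL : ∀ (i : ℕ) x, L[i]? = some x → L'[i]? = some x) :
    ∀ c n v, evln k L c n = some v → evln k' L' c n = some v := by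
  intro c
  induction c with
  | zero => intro n v h; exact h
  | succ => intro n v h; exact h
  | left => intro n v h; exact h
  | right => intro n v h; exact h
  | oracle => intro n v h; exact hL _ _ h
  | pair cf cg ihf ihg =>
    intro n v h
    simp only [evln, Option.bind_eq_some_iff, Option.map_eq_some_iff] at h ⊢
    obtain ⟨x, hx, y, hy, rfl⟩ := h
    exact ⟨x, ihf _ _ hx, y, ihg _ _ hy, rfl⟩
  | comp cf cg ihf ihg =>
    intro n v h
    simp only [evln, Option.bind_eq_some_iff] at h ⊢
    obtain ⟨x, hx, hv⟩ := h
    exact ⟨x, ihg _ _ hx, ihf _ _ hv⟩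
  | prec cf cg ihf ihg =>
    intro n
    simp only [evln]
    induction' n.unpair.2 with m IH
    · exact fun v h => ihf _ _ h
    · intro v h
      simp only [Option.bind_eq_some_iff] at h ⊢
      obtain ⟨i, hi, hv⟩ := h
      exact ⟨i, IH _ hi, ihg _ _ hv⟩
  | rfind cf ihf =>
    intro n v h
    rw [evln_rfind_iff] at h ⊢
    obtain ⟨h1, h2, h3⟩ := h
    refine ⟨by omega, ihf _ _ h2, fun i hi => ?_⟩
    obtain ⟨w, hw, hw0⟩ := h3 i hi
    exact ⟨w, ihf _ _ hw, hw0⟩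

theorem evln_sound {O : ℕ → ℕ} {k : ℕ} {L : List ℕ}
    (H : ∀ i x, L[i]? = some x → x = O i) :
    ∀ c n v, evln k L c n = some v → v ∈ evalo O c n := by
  intro c
  induction c with
  | zero =>
    intro n v h
    obtain rfl : (0 : ℕ) = v := by injection h
    exact Part.mem_some 0
  | succ =>
    intro n v h
    obtain rfl : n + 1 = v := by injection h
    simp [evalo, PFun.coe_val, Part.mem_some_iff]
  | left =>
    intro n v h
    obtain rfl : n.unpair.1 = v := by injection h
    simp [evalo, PFun.coe_val, Part.mem_some_iff]
  | right =>
    intro n v h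
    obtain rfl : n.unpair.2 = v := by injection h
    simp [evalo, PFun.coe_val, Part.mem_some_iff]
  | oracle =>
    intro n v h
    obtain rfl : v = O n := H _ _ h
    simp [evalo, PFun.coe_val, Part.mem_some_iff]
  | pair cf cg ihf ihg =>
    intro n v h
    simp only [evln, Option.bind_eq_some_iff, Option.map_eq_some_iff] at h
    obtain ⟨x, hx, y, hy, rfl⟩ := h
    simp only [evalo, Seq.seq, Part.map_eq_map, Part.bind_eq_bind, Part.mem_bind_iff,
      Part.mem_map_iff]
    exact ⟨_, ⟨x, ihf _ _ hx, rfl⟩, y, ihg _ _ hy, rfl⟩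
  | comp cf cg ihf ihg =>
    intro n v h
    simp only [evln, Option.bind_eq_some_iff] at h
    obtain ⟨x, hx, hv⟩ := h
    show v ∈ (evalo O cg n).bind (evalo O cf)
    refine Part.mem_bind_iff.2 ?_
    exact ⟨x, ihg _ _ hx, ihf _ _ hv⟩
  | prec cf cg ihf ihg =>
    intro n
    simp only [evln, evalo, Nat.unpaired]
    induction' n.unpair.2 with m IH
    · exact fun v h => ihf _ _ h
    · intro v h
      simp only [Option.bind_eq_some_iff] at h
      obtain ⟨i, hi, hv⟩ := h
      simp only [Part.bind_eq_bind, Part.mem_bind_iff]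
      exact ⟨i, IH _ hi, ihg _ _ hv⟩
  | rfind cf ihf =>
    intro n v h
    rw [evln_rfind_iff] at h
    obtain ⟨h1, h2, h3⟩ := h
    simp only [evalo, Part.map_eq_map, Nat.mem_rfind, Part.mem_map_iff]
    refine Nat.mem_rfind.2 ⟨(Part.mem_map_iff _).2 ⟨0, ihf _ _ h2, by simp⟩, fun {m} hm => ?_⟩
    obtain ⟨w, hw, hw0⟩ := h3 m hm
    exact (Part.mem_map_iff _).2 ⟨w, ihf _ _ hw, by simp [hw0]⟩

theorem tab_get {O : ℕ → ℕ} {k i : ℕ} (h : i < k) :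
    ((List.range k).map O)[i]? = some (O i) := by
  rw [List.getElem?_map, List.getElem?_range h]
  rfl

theorem tab_get_inv {O : ℕ → ℕ} {k i x : ℕ}
    (h : ((List.range k).map O)[i]? = some x) : x = O i := by
  rcases lt_or_ge i k with hik | hik
  · rw [tab_get hik] at h
    injection h with h'
    omega
  · rw [List.getElem?_eq_none_iff.2 (by simpa using hik)] at h
    cases h

theorem evln_complete {O : ℕ → ℕ} {c : codeo} {n v : ℕ} (h : v ∈ evalo O c n) :
    ∃ N, ∀ k ≥ N, evln k ((List.range k).map O) c n = some v := by
  induction c generalizing n v with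
  | zero =>
    obtain rfl : v = 0 := Part.mem_some_iff.1 h
    exact ⟨0, fun k _ => rfl⟩
  | succ =>
    obtain rfl : v = n + 1 := Part.mem_some_iff.1 h
    exact ⟨0, fun k _ => rfl⟩
  | left =>
    obtain rfl : v = n.unpair.1 := Part.mem_some_iff.1 h
    exact ⟨0, fun k _ => rfl⟩
  | right =>
    obtain rfl : v = n.unpair.2 := Part.mem_some_iff.1 h
    exact ⟨0, fun k _ => rfl⟩
  | oracle =>
    obtain rfl : v = O n := Part.mem_some_iff.1 h
    exact ⟨n + 1, fun k hk => by simpa [evln] using tab_get (show n < k by omega)⟩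
  | pair cf cg ihf ihg =>
    simp only [evalo, Seq.seq, Part.map_eq_map, Part.bind_eq_bind, Part.mem_bind_iff,
      Part.mem_map_iff] at h
    obtain ⟨_, ⟨x, hx, rfl⟩, y, hy, rfl⟩ := h
    obtain ⟨N₁, h₁⟩ := ihf hx
    obtain ⟨N₂, h₂⟩ := ihg hy
    refine ⟨max N₁ N₂, fun k hk => ?_⟩
    simp [evln, Option.bind_eq_some_iff, h₁ k (le_trans (le_max_left _ _) hk),
      h₂ k (le_trans (le_max_right _ _) hk)]
  | comp cf cg ihf ihg =>
    have h : v ∈ (evalo O cg n).bind (evalo O cf) := h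
    replace h := Part.mem_bind_iff.1 h
    obtain ⟨x, hx, hv⟩ := h
    obtain ⟨N₁, h₁⟩ := ihg hx
    obtain ⟨N₂, h₂⟩ := ihf hv
    refine ⟨max N₁ N₂, fun k hk => ?_⟩
    simp [evln, Option.bind_eq_some_iff, h₁ k (le_trans (le_max_left _ _) hk),
      h₂ k (le_trans (le_max_right _ _) hk)]
  | prec cf cg ihf ihg =>
    simp only [evalo, Nat.unpaired] at h
    have inner : ∀ (a m v : ℕ),
        v ∈ (Nat.rec (evalo O cf a)
          (fun y IH => IH >>= fun i => evalo O cg (Nat.pair a (Nat.pair y i))) m : Part ℕ) →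
        ∃ N, ∀ k ≥ N, (Nat.rec (evln k ((List.range k).map O) cf a)
          (fun y IH => IH.bind fun i =>
            evln k ((List.range k).map O) cg (Nat.pair a (Nat.pair y i))) m : Option ℕ) =
          some v := by
      intro a m
      induction m with
      | zero => intro v h; exact ihf h
      | succ m ih =>
        intro v h
        have h' : v ∈ (Nat.rec (evalo O cf a)
            (fun y IH => IH >>= fun i => evalo O cg (Nat.pair a (Nat.pair y i))) m :
              Part ℕ) >>= fun i => evalo O cg (Nat.pair a (Nat.pair m i)) := h
        simp only [Part.bind_eq_bind, Part.mem_bind_iff] at h'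
        obtain ⟨i, hi, hv⟩ := h'
        obtain ⟨N₁, h₁⟩ := ih _ hi
        obtain ⟨N₂, h₂⟩ := ihg hv
        refine ⟨max N₁ N₂, fun k hk => ?_⟩
        have e₁ := h₁ k (le_trans (le_max_left _ _) hk)
        have e₂ := h₂ k (le_trans (le_max_right _ _) hk)
        show (Nat.rec (evln k ((List.range k).map O) cf a)
          (fun y IH => IH.bind fun i =>
            evln k ((List.range k).map O) cg (Nat.pair a (Nat.pair y i))) m : Option ℕ).bind
            (fun i => evln k ((List.range k).map O) cg (Nat.pair a (Nat.pair m i))) = some v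
        rw [e₁]
        simpa using e₂
    obtain ⟨N, hN⟩ := inner n.unpair.1 n.unpair.2 v h
    exact ⟨N, fun k hk => hN k hk⟩
  | rfind cf ihf =>
    simp only [evalo] at h
    obtain ⟨hu', hbelow'⟩ := Nat.mem_rfind.1 h
    obtain ⟨u, hu, hu0⟩ := (Part.mem_map_iff _).1 hu'
    have hbelow : ∀ {m}, m < v → ∃ w ∈ evalo O cf (Nat.pair n m), decide (w = 0) = false :=
      fun hm => (Part.mem_map_iff _).1 (hbelow' hm)
    obtain rfl : u = 0 := by simpa using hu0
    have hb : ∀ m, m < v → ∃ w, w ∈ evalo O cf (Nat.pair n m) ∧ w ≠ 0 := by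
      intro m hm
      obtain ⟨w, hw, hw0⟩ := hbelow hm
      exact ⟨w, hw, by simpa using hw0⟩
    classical
    choose w hw hw0 using hb
    have hN : ∀ m (hm : m < v), ∃ N, ∀ k ≥ N,
        evln k ((List.range k).map O) cf (Nat.pair n m) = some (w m hm) :=
      fun m hm => ihf (hw m hm)
    choose Nf hNf using hN
    obtain ⟨N₀, hN₀⟩ := ihf hu
    set Nb : ℕ := (Finset.range v).sup (fun m => if hm : m < v then Nf m hm else 0) with hNb
    refine ⟨max (max N₀ Nb) (v + 1), fun k hk => ?_⟩
    rw [evln_rfind_iff]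
    refine ⟨by omega, hN₀ k (by omega), fun i hi => ?_⟩
    refine ⟨w i hi, hNf i hi k ?_, hw0 i hi⟩
    have hle : Nf i hi ≤ Nb := by
      have h' := Finset.le_sup (f := fun m => if hm : m < v then Nf m hm else 0)
        (Finset.mem_range.2 hi)
      simpa [hi] using h'
    omega

end S7
namespace S7

theorem comp_deqO : Computable₂ (fun a b : Option ℕ => decide (a = b)) := Primrec.eq.decide.to_comp

set_option maxHeartbeats 2000000 in
theorem computable_evln (c : codeo) :
    Computable fun q : ℕ × List ℕ × ℕ => evln q.1 q.2.1 c q.2.2 := by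
  have cK : Computable fun q : ℕ × List ℕ × ℕ => q.1 := Computable.fst
  have cL : Computable fun q : ℕ × List ℕ × ℕ => q.2.1 := Computable.fst.comp Computable.snd
  have cN : Computable fun q : ℕ × List ℕ × ℕ => q.2.2 := Computable.snd.comp Computable.snd
  induction c with
  | zero => exact Computable.const (some 0)
  | succ => exact Computable.option_some.comp (Computable.succ.comp cN)
  | left =>
    exact Computable.option_some.comp ((Computable.fst.comp Computable.unpair).comp cN)
  | right =>
    exact Computable.option_some.comp ((Computable.snd.comp Computable.unpair).comp cN)
  | oracle => exact Computable.list_getElem?.comp cL cN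
  | pair cf cg ihf ihg =>
    have hg : Computable₂ fun (q : ℕ × List ℕ × ℕ) (x : ℕ) =>
        (evln q.1 q.2.1 cg q.2.2).map fun y => Nat.pair x y := by
      have h1 : Computable fun p : (ℕ × List ℕ × ℕ) × ℕ =>
          evln p.1.1 p.1.2.1 cg p.1.2.2 := (ihg.comp Computable.fst).of_eq fun _ => rfl
      have h2 : Computable₂ fun (p : (ℕ × List ℕ × ℕ) × ℕ) (y : ℕ) =>
          Nat.pair p.2 y :=
        Primrec₂.natPair.to_comp.comp (Computable.snd.comp Computable.fst) Computable.snd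
      exact (Computable.option_map h1 h2).of_eq fun _ => rfl
    exact (Computable.option_bind ihf hg).of_eq fun _ => rfl
  | comp cf cg ihf ihg =>
    have hg : Computable₂ fun (q : ℕ × List ℕ × ℕ) (x : ℕ) => evln q.1 q.2.1 cf x := by
      have hre : Computable fun p : (ℕ × List ℕ × ℕ) × ℕ =>
          ((p.1.1, p.1.2.1, p.2) : ℕ × List ℕ × ℕ) :=
        (Computable.fst.comp Computable.fst).pair
          (((Computable.fst.comp Computable.snd).comp Computable.fst).pair Computable.snd)
      exact (ihf.comp hre).of_eq fun _ => rfl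
    exact (Computable.option_bind ihg hg).of_eq fun _ => rfl
  | prec cf cg ihf ihg =>
    have hf : Computable fun q : ℕ × List ℕ × ℕ => q.2.2.unpair.2 :=
      (Computable.snd.comp Computable.unpair).comp cN
    have hg : Computable fun q : ℕ × List ℕ × ℕ =>
        evln q.1 q.2.1 cf q.2.2.unpair.1 := by
      have hre : Computable fun q : ℕ × List ℕ × ℕ =>
          ((q.1, q.2.1, q.2.2.unpair.1) : ℕ × List ℕ × ℕ) :=
        cK.pair (cL.pair ((Computable.fst.comp Computable.unpair).comp cN))
      exact (ihf.comp hre).of_eq fun _ => rfl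
    have hh : Computable₂ fun (q : ℕ × List ℕ × ℕ) (yIH : ℕ × Option ℕ) =>
        yIH.2.bind fun i => evln q.1 q.2.1 cg (Nat.pair q.2.2.unpair.1 (Nat.pair yIH.1 i)) := by
      have hfo : Computable fun p : (ℕ × List ℕ × ℕ) × ℕ × Option ℕ => p.2.2 :=
        Computable.snd.comp Computable.snd
      have hgo : Computable₂ fun (p : (ℕ × List ℕ × ℕ) × ℕ × Option ℕ) (i : ℕ) =>
          evln p.1.1 p.1.2.1 cg (Nat.pair p.1.2.2.unpair.1 (Nat.pair p.2.1 i)) := by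
        have hre : Computable fun z : ((ℕ × List ℕ × ℕ) × ℕ × Option ℕ) × ℕ =>
            ((z.1.1.1, z.1.1.2.1,
              Nat.pair z.1.1.2.2.unpair.1 (Nat.pair z.1.2.1 z.2)) : ℕ × List ℕ × ℕ) := by
          have a1 : Computable fun z : ((ℕ × List ℕ × ℕ) × ℕ × Option ℕ) × ℕ => z.1.1.1 :=
            (Computable.fst.comp Computable.fst).comp Computable.fst
          have a2 : Computable fun z : ((ℕ × List ℕ × ℕ) × ℕ × Option ℕ) × ℕ => z.1.1.2.1 :=
            ((Computable.fst.comp Computable.snd).comp Computable.fst).comp Computable.fst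
          have a3 : Computable fun z : ((ℕ × List ℕ × ℕ) × ℕ × Option ℕ) × ℕ =>
              z.1.1.2.2.unpair.1 :=
            (Computable.fst.comp Computable.unpair).comp
              (((Computable.snd.comp Computable.snd).comp Computable.fst).comp Computable.fst)
          have a4 : Computable fun z : ((ℕ × List ℕ × ℕ) × ℕ × Option ℕ) × ℕ => z.1.2.1 :=
            (Computable.fst.comp Computable.snd).comp Computable.fst
          have a5 : Computable fun z : ((ℕ × List ℕ × ℕ) × ℕ × Option ℕ) × ℕ => z.2 :=
            Computable.snd
          exact a1.pair (a2.pair (Primrec₂.natPair.to_comp.comp a3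
            (Primrec₂.natPair.to_comp.comp a4 a5)))
        exact (ihg.comp hre).of_eq fun _ => rfl
      exact (Computable.option_bind hfo hgo).of_eq fun _ => rfl
    exact (Computable.nat_rec hf hg hh).of_eq fun q => by simp only [evln]
  | rfind cf ihf =>
    have hre : Computable fun p : (ℕ × List ℕ × ℕ) × ℕ =>
        ((p.1.1, p.1.2.1, Nat.pair p.1.2.2 p.2) : ℕ × List ℕ × ℕ) :=
      (Computable.fst.comp Computable.fst).pair
        (((Computable.fst.comp Computable.snd).comp Computable.fst).pair
          (Primrec₂.natPair.to_comp.comp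
            ((Computable.snd.comp Computable.snd).comp Computable.fst) Computable.snd))
    have hsub : Computable fun p : (ℕ × List ℕ × ℕ) × ℕ =>
        evln p.1.1 p.1.2.1 cf (Nat.pair p.1.2.2 p.2) := (ihf.comp hre).of_eq fun _ => rfl
    have hA : Computable₂ fun (q : ℕ × List ℕ × ℕ) (m : ℕ) =>
        decide (evln q.1 q.2.1 cf (Nat.pair q.2.2 m) = some 0) :=
      (comp_deqO.comp hsub (Computable.const (some 0))).of_eq fun _ => rfl
    have hB : Computable₂ fun (q : ℕ × List ℕ × ℕ) (i : ℕ) =>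
        !(evln q.1 q.2.1 cf (Nat.pair q.2.2 i)).isSome :=
      (comp_not.comp (Primrec.option_isSome.to_comp.comp hsub)).of_eq fun _ => rfl
    have hr : Computable fun q : ℕ × List ℕ × ℕ =>
        lwB (fun m => decide (evln q.1 q.2.1 cf (Nat.pair q.2.2 m) = some 0)) q.1 :=
      ((computable_lwB hA).comp Computable.id cK).of_eq fun _ => rfl
    have hr2 : Computable fun q : ℕ × List ℕ × ℕ =>
        lwB (fun i => !(evln q.1 q.2.1 cf (Nat.pair q.2.2 i)).isSome)
          (lwB (fun m => decide (evln q.1 q.2.1 cf (Nat.pair q.2.2 m) = some 0)) q.1) :=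
      ((computable_lwB hB).comp Computable.id hr).of_eq fun _ => rfl
    have hcond : Computable fun q : ℕ × List ℕ × ℕ =>
        (decide (lwB (fun m => decide (evln q.1 q.2.1 cf (Nat.pair q.2.2 m) = some 0)) q.1
            < q.1) &&
         decide (lwB (fun i => !(evln q.1 q.2.1 cf (Nat.pair q.2.2 i)).isSome)
            (lwB (fun m => decide (evln q.1 q.2.1 cf (Nat.pair q.2.2 m) = some 0)) q.1) =
          lwB (fun m => decide (evln q.1 q.2.1 cf (Nat.pair q.2.2 m) = some 0)) q.1)) :=
      (comp_and.comp (comp_dlt.comp hr cK) (comp_deq.comp hr2 hr)).of_eq fun _ => rfl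
    have := Computable.cond hcond (Computable.option_some.comp hr)
      (Computable.const (none : Option ℕ))
    refine this.of_eq fun q => ?_
    simp only [evln]
    by_cases h1 : lwB (fun m => decide (evln q.1 q.2.1 cf (Nat.pair q.2.2 m) = some 0)) q.1
        < q.1 <;>
      by_cases h2 : lwB (fun i => !(evln q.1 q.2.1 cf (Nat.pair q.2.2 i)).isSome)
          (lwB (fun m => decide (evln q.1 q.2.1 cf (Nat.pair q.2.2 m) = some 0)) q.1) =
        lwB (fun m => decide (evln q.1 q.2.1 cf (Nat.pair q.2.2 m) = some 0)) q.1 <;>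
      simp [h1, h2]

end S7
namespace S7

/-- exit-with-`∉Z`-bit bool: `t` is an exit of `y` and the oracle table says the pair is not in Z -/
def exb (Fa : ℕ → ℕ → ℕ) (L : List ℕ) (y t : ℕ) : Bool :=
  decide (Fa t y = 1) && decide (Fa (t + 1) y = 0) &&
    decide (L[(2 * Nat.pair y t + 1)]? = some 0)

/-- case-A inner witness predicate -/
def paB (Fa : ℕ → ℕ → ℕ) (c : codeo) (L : List ℕ) (k y w : ℕ) : Bool :=
  decide (y < w) && (evln k L c w).isSome && decide (lwB (exb Fa L w) k < k)

/-- case-A search predicate (`0` = fire) -/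
def qaB (Fa : ℕ → ℕ → ℕ) (c : codeo) : ℕ → ℕ := fun m =>
  if lwB (paB Fa c (Denumerable.ofNat (List ℕ) m.unpair.2) m.unpair.1.unpair.2
      m.unpair.1.unpair.1) m.unpair.1.unpair.2 < m.unpair.1.unpair.2 then 0 else 1

/-- case-A output -/
def eaB (Fa : ℕ → ℕ → ℕ) (c : codeo) : ℕ → ℕ := fun m =>
  Fa (lwB (paB Fa c (Denumerable.ofNat (List ℕ) m.unpair.2) m.unpair.1.unpair.2
      m.unpair.1.unpair.1) m.unpair.1.unpair.2 + 1) m.unpair.1.unpair.1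

/-- case-B search predicate (`0` = fire) -/
def qbB (Fa : ℕ → ℕ → ℕ) (c : codeo) : ℕ → ℕ := fun m =>
  if lwB (exb Fa (Denumerable.ofNat (List ℕ) m.unpair.2) m.unpair.1.unpair.1)
        m.unpair.1.unpair.2 < m.unpair.1.unpair.2 ∨
      (evln m.unpair.1.unpair.2 (Denumerable.ofNat (List ℕ) m.unpair.2) c
        m.unpair.1.unpair.1).isSome
  then 0 else 1

/-- case-B output -/
def ebB (Fa : ℕ → ℕ → ℕ) (c : codeo) : ℕ → ℕ := fun m =>
  if lwB (exb Fa (Denumerable.ofNat (List ℕ) m.unpair.2) m.unpair.1.unpair.1)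
      m.unpair.1.unpair.2 < m.unpair.1.unpair.2 then 0 else 1

section Comp
variable {Fa : ℕ → ℕ → ℕ} (hcomp : Computable fun p : ℕ × ℕ => Fa p.1 p.2) (c : codeo)

-- decoding projections
private theorem cY : Computable fun m : ℕ => m.unpair.1.unpair.1 :=
  (Computable.fst.comp Computable.unpair).comp (Computable.fst.comp Computable.unpair)
private theorem cKk : Computable fun m : ℕ => m.unpair.1.unpair.2 :=
  (Computable.snd.comp Computable.unpair).comp (Computable.fst.comp Computable.unpair)
private theorem cLs : Computable fun m : ℕ => Denumerable.ofNat (List ℕ) m.unpair.2 :=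
  (Computable.ofNat (List ℕ)).comp (Computable.snd.comp Computable.unpair)

include hcomp in
/-- computability of `fun (m, t) ↦ exb Fa (L m) (y m) t` for computable `L`, `y` -/
theorem comp_exb {α : Type} [Primcodable α] {Lf : α → List ℕ} {yf : α → ℕ}
    (hLf : Computable Lf) (hyf : Computable yf) :
    Computable₂ fun m t => exb Fa (Lf m) (yf m) t := by
  have cFa : Computable₂ Fa := hcomp
  have a1 : Computable fun z : α × ℕ => decide (Fa z.2 (yf z.1) = 1) :=
    (comp_deq.comp (cFa.comp Computable.snd (hyf.comp Computable.fst))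
      (Computable.const 1)).of_eq fun _ => rfl
  have a2 : Computable fun z : α × ℕ => decide (Fa (z.2 + 1) (yf z.1) = 0) :=
    (comp_deq.comp (cFa.comp (Computable.succ.comp Computable.snd)
      (hyf.comp Computable.fst)) (Computable.const 0)).of_eq fun _ => rfl
  have apos : Computable fun z : α × ℕ => 2 * Nat.pair (yf z.1) z.2 + 1 :=
    (Computable.succ.comp ((Primrec.nat_mul.to_comp).comp (Computable.const 2)
      (Primrec₂.natPair.to_comp.comp (hyf.comp Computable.fst)
        Computable.snd))).of_eq fun _ => rfl
  have a3 : Computable fun z : α × ℕ =>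
      decide ((Lf z.1)[(2 * Nat.pair (yf z.1) z.2 + 1)]? = some 0) :=
    (comp_deqO.comp (Computable.list_getElem?.comp (hLf.comp Computable.fst) apos)
      (Computable.const (some 0))).of_eq fun _ => rfl
  exact ((comp_and.comp (comp_and.comp a1 a2) a3)).of_eq fun _ => rfl

include hcomp in
theorem comp_qaB : Computable (qaB Fa c) := by
  -- inner: Computable₂ fun (z : ℕ × ℕ) (t : ℕ) => exb Fa (L z.1) (w := z.2) t ; here the
  -- "point" is (m, w) pairs
  have hex : Computable₂ fun (z : ℕ × ℕ) t =>
      exb Fa (Denumerable.ofNat (List ℕ) z.1.unpair.2) z.2 t :=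
    comp_exb hcomp (cLs.comp Computable.fst) Computable.snd
  have hlex : Computable fun z : ℕ × ℕ =>
      lwB (exb Fa (Denumerable.ofNat (List ℕ) z.1.unpair.2) z.2) z.1.unpair.1.unpair.2 :=
    ((computable_lwB hex).comp Computable.id (cKk.comp Computable.fst)).of_eq fun _ => rfl
  have hev : Computable fun z : ℕ × ℕ =>
      (evln z.1.unpair.1.unpair.2 (Denumerable.ofNat (List ℕ) z.1.unpair.2) c z.2).isSome := by
    have hre : Computable fun z : ℕ × ℕ =>
        ((z.1.unpair.1.unpair.2, Denumerable.ofNat (List ℕ) z.1.unpair.2, z.2) :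
          ℕ × List ℕ × ℕ) :=
      (cKk.comp Computable.fst).pair ((cLs.comp Computable.fst).pair Computable.snd)
    exact (Primrec.option_isSome.to_comp.comp
      ((computable_evln c).comp hre)).of_eq fun _ => rfl
  have hpa : Computable₂ fun (m : ℕ) (w : ℕ) =>
      paB Fa c (Denumerable.ofNat (List ℕ) m.unpair.2) m.unpair.1.unpair.2
        m.unpair.1.unpair.1 w := by
    have a1 : Computable fun z : ℕ × ℕ => decide (z.1.unpair.1.unpair.1 < z.2) :=
      comp_dlt.comp (cY.comp Computable.fst) Computable.snd
    have a3 : Computable fun z : ℕ × ℕ =>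
        decide (lwB (exb Fa (Denumerable.ofNat (List ℕ) z.1.unpair.2) z.2)
          z.1.unpair.1.unpair.2 < z.1.unpair.1.unpair.2) :=
      (comp_dlt.comp hlex (cKk.comp Computable.fst)).of_eq fun _ => rfl
    exact (comp_and.comp (comp_and.comp a1 hev) a3).of_eq fun _ => rfl
  have hlw : Computable fun m : ℕ =>
      lwB (paB Fa c (Denumerable.ofNat (List ℕ) m.unpair.2) m.unpair.1.unpair.2
        m.unpair.1.unpair.1) m.unpair.1.unpair.2 :=
    ((computable_lwB hpa).comp Computable.id cKk).of_eq fun _ => rfl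
  have := Computable.cond ((comp_dlt.comp hlw cKk).of_eq fun _ => rfl)
    (Computable.const 0) (Computable.const 1)
  refine this.of_eq fun m => ?_
  by_cases h : lwB (paB Fa c (Denumerable.ofNat (List ℕ) m.unpair.2) m.unpair.1.unpair.2
      m.unpair.1.unpair.1) m.unpair.1.unpair.2 < m.unpair.1.unpair.2 <;>
    simp [qaB, h]

include hcomp in
theorem comp_eaB : Computable (eaB Fa c) := by
  have hex : Computable₂ fun (z : ℕ × ℕ) t =>
      exb Fa (Denumerable.ofNat (List ℕ) z.1.unpair.2) z.2 t :=
    comp_exb hcomp (cLs.comp Computable.fst) Computable.snd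
  have hlex : Computable fun z : ℕ × ℕ =>
      lwB (exb Fa (Denumerable.ofNat (List ℕ) z.1.unpair.2) z.2) z.1.unpair.1.unpair.2 :=
    ((computable_lwB hex).comp Computable.id (cKk.comp Computable.fst)).of_eq fun _ => rfl
  have hev : Computable fun z : ℕ × ℕ =>
      (evln z.1.unpair.1.unpair.2 (Denumerable.ofNat (List ℕ) z.1.unpair.2) c z.2).isSome := by
    have hre : Computable fun z : ℕ × ℕ =>
        ((z.1.unpair.1.unpair.2, Denumerable.ofNat (List ℕ) z.1.unpair.2, z.2) :
          ℕ × List ℕ × ℕ) :=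
      (cKk.comp Computable.fst).pair ((cLs.comp Computable.fst).pair Computable.snd)
    exact (Primrec.option_isSome.to_comp.comp
      ((computable_evln c).comp hre)).of_eq fun _ => rfl
  have hpa : Computable₂ fun (m : ℕ) (w : ℕ) =>
      paB Fa c (Denumerable.ofNat (List ℕ) m.unpair.2) m.unpair.1.unpair.2
        m.unpair.1.unpair.1 w := by
    have a1 : Computable fun z : ℕ × ℕ => decide (z.1.unpair.1.unpair.1 < z.2) :=
      comp_dlt.comp (cY.comp Computable.fst) Computable.snd
    have a3 : Computable fun z : ℕ × ℕ =>
        decide (lwB (exb Fa (Denumerable.ofNat (List ℕ) z.1.unpair.2) z.2)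
          z.1.unpair.1.unpair.2 < z.1.unpair.1.unpair.2) :=
      (comp_dlt.comp hlex (cKk.comp Computable.fst)).of_eq fun _ => rfl
    exact (comp_and.comp (comp_and.comp a1 hev) a3).of_eq fun _ => rfl
  have hlw : Computable fun m : ℕ =>
      lwB (paB Fa c (Denumerable.ofNat (List ℕ) m.unpair.2) m.unpair.1.unpair.2
        m.unpair.1.unpair.1) m.unpair.1.unpair.2 :=
    ((computable_lwB hpa).comp Computable.id cKk).of_eq fun _ => rfl
  have cFa : Computable₂ Fa := hcomp
  exact (cFa.comp (Computable.succ.comp hlw) cY).of_eq fun _ => rfl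

include hcomp in
theorem comp_qbB : Computable (qbB Fa c) := by
  have hex : Computable₂ fun (m : ℕ) t =>
      exb Fa (Denumerable.ofNat (List ℕ) m.unpair.2) m.unpair.1.unpair.1 t :=
    comp_exb hcomp cLs cY
  have hlex : Computable fun m : ℕ =>
      lwB (exb Fa (Denumerable.ofNat (List ℕ) m.unpair.2) m.unpair.1.unpair.1)
        m.unpair.1.unpair.2 :=
    ((computable_lwB hex).comp Computable.id cKk).of_eq fun _ => rfl
  have hev : Computable fun m : ℕ =>
      (evln m.unpair.1.unpair.2 (Denumerable.ofNat (List ℕ) m.unpair.2) c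
        m.unpair.1.unpair.1).isSome := by
    have hre : Computable fun m : ℕ =>
        ((m.unpair.1.unpair.2, Denumerable.ofNat (List ℕ) m.unpair.2, m.unpair.1.unpair.1) :
          ℕ × List ℕ × ℕ) := cKk.pair (cLs.pair cY)
    exact (Primrec.option_isSome.to_comp.comp
      ((computable_evln c).comp hre)).of_eq fun _ => rfl
  have hcondb : Computable fun m : ℕ =>
      (decide (lwB (exb Fa (Denumerable.ofNat (List ℕ) m.unpair.2) m.unpair.1.unpair.1)
          m.unpair.1.unpair.2 < m.unpair.1.unpair.2) ||
        (evln m.unpair.1.unpair.2 (Denumerable.ofNat (List ℕ) m.unpair.2) c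
          m.unpair.1.unpair.1).isSome) :=
    (comp_or.comp ((comp_dlt.comp hlex cKk).of_eq fun _ => rfl) hev).of_eq fun _ => rfl
  have := Computable.cond hcondb (Computable.const 0) (Computable.const 1)
  refine this.of_eq fun m => ?_
  by_cases h1 : lwB (exb Fa (Denumerable.ofNat (List ℕ) m.unpair.2) m.unpair.1.unpair.1)
      m.unpair.1.unpair.2 < m.unpair.1.unpair.2 <;>
    by_cases h2 : (evln m.unpair.1.unpair.2 (Denumerable.ofNat (List ℕ) m.unpair.2) c
        m.unpair.1.unpair.1).isSome <;>
      simp [qbB, h1, h2]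

include hcomp in
theorem comp_ebB : Computable (ebB Fa c) := by
  have hex : Computable₂ fun (m : ℕ) t =>
      exb Fa (Denumerable.ofNat (List ℕ) m.unpair.2) m.unpair.1.unpair.1 t :=
    comp_exb hcomp cLs cY
  have hlex : Computable fun m : ℕ =>
      lwB (exb Fa (Denumerable.ofNat (List ℕ) m.unpair.2) m.unpair.1.unpair.1)
        m.unpair.1.unpair.2 :=
    ((computable_lwB hex).comp Computable.id cKk).of_eq fun _ => rfl
  have := Computable.cond ((comp_dlt.comp hlex cKk).of_eq fun _ => rfl)
    (Computable.const 0) (Computable.const 1)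
  refine this.of_eq fun m => ?_
  by_cases h : lwB (exb Fa (Denumerable.ofNat (List ℕ) m.unpair.2) m.unpair.1.unpair.1)
      m.unpair.1.unpair.2 < m.unpair.1.unpair.2 <;>
    simp [ebB, h]

end Comp
end S7
namespace S7

theorem chi_eq_one {A : Set ℕ} {n : ℕ} : chi A n = 1 ↔ n ∈ A := by
  unfold chi; split_ifs with h <;> simp [h]

theorem chi_eq_zero {A : Set ℕ} {n : ℕ} : chi A n = 0 ↔ n ∉ A := by
  unfold chi; split_ifs with h <;> simp [h]

theorem join_even {E Z : Set ℕ} (n : ℕ) : 2 * n ∈ join E Z ↔ n ∈ E := by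
  unfold join
  constructor
  · rintro (⟨m, hm, he⟩ | ⟨m, hm, he⟩)
    · obtain rfl : n = m := by omega
      exact hm
    · omega
  · intro h; exact Or.inl ⟨n, h, rfl⟩

theorem join_odd {E Z : Set ℕ} (p : ℕ) : 2 * p + 1 ∈ join E Z ↔ p ∈ Z := by
  unfold join
  constructor
  · rintro (⟨m, hm, he⟩ | ⟨m, hm, he⟩)
    · omega
    · obtain rfl : p = m := by omega
      exact hm
  · intro h; exact Or.inr ⟨p, h, rfl⟩

section Main
variable {E Z : Set ℕ} {F : ℕ → ℕ} {Fa : ℕ → ℕ → ℕ} {Ut Vt : Set ℕ}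

/-- `F` is 0/1-valued -/
theorem F01 (hval : ∀ s x, Fa s x ≤ 1) (hlim : ∀ x, ∃ N, ∀ s ≥ N, Fa s x = F x) (y : ℕ) :
    F y = 0 ∨ F y = 1 := by
  obtain ⟨N, hN⟩ := hlim y
  have := hval N y
  have := hN N (le_refl N)
  omega

/-- the central hole-reading lemma: an exposed true checkpoint freezes everything below -/
theorem hole_read
    (hlim : ∀ x, ∃ N, ∀ s ≥ N, Fa s x = F x)
    (hmon : ∀ x y s t, x < y → y < s → s < t → Fa s x ≠ Fa (s + 1) x → Fa s y = Fa t y)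
    (hUt : Ut = {m : ℕ | ∃ y t, m = Nat.pair y t ∧
      (∃ x s, x < y ∧ y < s ∧ Fa s x ≠ Fa (s + 1) x ∧ Fa s y = 1 ∧ Fa t y = 1) ∧
      Fa (t + 1) y = 0})
    (hUZ : Ut ⊆ Z) {w t : ℕ} (hZ : Nat.pair w t ∉ Z) (h1 : Fa t w = 1)
    (h2 : Fa (t + 1) w = 0) (hFw : F w = 1) :
    ∀ y < w, F y = Fa (w + 1) y := by
  -- first: no x < w ever flips at a stage > w
  have hnoflip : ∀ x s, x < w → w < s → Fa s x = Fa (s + 1) x := by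
    intro x s hxw hws
    by_contra hflip
    have hfs : Fa s w = F w := freeze hlim hmon hxw hws hflip
    have : Nat.pair w t ∈ Ut := by
      rw [hUt]
      exact ⟨w, t, rfl, ⟨x, s, hxw, hws, hflip, by rw [hfs, hFw], h1⟩, h2⟩
    exact hZ (hUZ this)
  intro y hyw
  -- column y is constant from stage w+1 on
  have hconst : ∀ s, w + 1 ≤ s → Fa s y = Fa (w + 1) y := by
    intro s hs
    induction s, hs using Nat.le_induction with
    | base => rfl
    | succ s hs ih =>
      rw [← ih]
      exact (hnoflip y s hyw (by omega)).symm
  obtain ⟨N, hN⟩ := hlim y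
  rw [← hN (max N (w + 1)) (le_max_left _ _), hconst _ (le_max_right _ _)]

/-- if `F y = 0` then `y` has a final exit whose pair is not in `Z` -/
theorem last_exit
    (hval : ∀ s x, Fa s x ≤ 1)
    (hlim : ∀ x, ∃ N, ∀ s ≥ N, Fa s x = F x)
    (h0 : ∀ x, Fa 0 x = 1)
    (hVt : Vt = {m : ℕ | ∃ y t, m = Nat.pair y t ∧
      (∃ s > t, Fa s y = 1 ∧ Fa t y = 1) ∧ Fa (t + 1) y = 0})
    (hZV : Z ⊆ Vt) {y : ℕ} (hFy : F y = 0) :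
    ∃ t, Fa t y = 1 ∧ Fa (t + 1) y = 0 ∧ Nat.pair y t ∉ Z := by
  classical
  obtain ⟨N, hN⟩ := hlim y
  set t := Nat.findGreatest (fun t => Fa t y = 1) N with ht
  have ht1 : Fa t y = 1 := Nat.findGreatest_spec (P := fun t => Fa t y = 1) (Nat.zero_le N) (h0 y)
  have hafter : ∀ s, t < s → Fa s y = 0 := by
    intro s hs
    rcases le_or_gt s N with hsN | hsN
    · have := Nat.findGreatest_is_greatest (P := fun t => Fa t y = 1) hs hsN
      have := hval s y
      omega
    · rw [hN s (by omega), hFy]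
  refine ⟨t, ht1, hafter _ (by omega), fun hmem => ?_⟩
  have hv := hZV hmem
  rw [hVt] at hv
  obtain ⟨y', t', hpair, ⟨s, hst, hs1, _⟩, _⟩ := hv
  obtain ⟨rfl, rfl⟩ : y = y' ∧ t = t' := by
    have h1 := congrArg (fun m => m.unpair.1) hpair
    have h2 := congrArg (fun m => m.unpair.2) hpair
    simp [Nat.unpair_pair] at h1 h2
    exact ⟨h1, h2⟩
  rw [hafter s hst] at hs1
  omega

end Main
end S7
namespace S7

def pack (O : ℕ → ℕ) (y k : ℕ) : ℕ := Nat.pair (Nat.pair y k) (tabf O k)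

def composite (O : ℕ → ℕ) (q e : ℕ → ℕ) : ℕ →. ℕ := fun n =>
  (Nat.pair <$> (↑(fun x : ℕ => x) : ℕ →. ℕ) n <*>
    Nat.rfind fun m => (fun v : ℕ => v = 0) <$>
      (↑(fun m' : ℕ => q (Nat.pair m' (tabf O m'.unpair.2))) : ℕ →. ℕ) (Nat.pair n m)) >>=
  (↑(fun m' : ℕ => e (Nat.pair m' (tabf O m'.unpair.2))) : ℕ →. ℕ)

theorem recIn_packed {O : ℕ → ℕ} {q : ℕ → ℕ} (hq : Computable q) :
    RecursiveInFn O ↑(fun m' : ℕ => q (Nat.pair m' (tabf O m'.unpair.2))) := by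
  have hinner : RecursiveInFn O ↑(fun m' : ℕ => Nat.pair m' (tabf O m'.unpair.2)) := by
    have := recIn_totalPair (O := O) (recIn_of_computable Computable.id)
      (recIn_totalComp recIn_tabf
        (recIn_of_computable (Computable.snd.comp Computable.unpair)))
    exact recIn_of_eq this fun n => rfl
  exact recIn_of_eq (recIn_totalComp (recIn_of_computable hq) hinner) fun n => rfl

theorem recIn_composite {O : ℕ → ℕ} {q e : ℕ → ℕ} (hq : Computable q) (he : Computable e) :
    RecursiveInFn O (composite O q e) := by
  have hrf := RecursiveInFn.rfind (recIn_packed (O := O) hq)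
  have hpr := RecursiveInFn.pair (recIn_of_computable Computable.id) hrf
  have := RecursiveInFn.comp (recIn_packed (O := O) he) hpr
  exact recIn_of_eq this fun n => rfl

theorem composite_eval (O : ℕ → ℕ) (q e : ℕ → ℕ) (y : ℕ)
    (hex : ∃ k, q (pack O y k) = 0) :
    ∃ k, q (pack O y k) = 0 ∧ composite O q e y = Part.some (e (pack O y k)) := by
  classical
  have hex' : ∃ k, q (Nat.pair (Nat.pair y k) (tabf O k)) = 0 := hex
  let k₀ := Nat.find hex'
  have hk₀ : q (Nat.pair (Nat.pair y k₀) (tabf O k₀)) = 0 := Nat.find_spec hex'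
  have hmin : ∀ m, m < k₀ → q (Nat.pair (Nat.pair y m) (tabf O m)) ≠ 0 :=
    fun m hm => Nat.find_min hex' hm
  refine ⟨k₀, hk₀, ?_⟩
  rw [Part.eq_some_iff]
  show e (pack O y k₀) ∈ _ >>= _
  refine Part.mem_bind_iff.2 ?_
  refine ⟨Nat.pair y k₀, ?_, ?_⟩
  · simp only [Seq.seq, Part.map_eq_map, Part.bind_eq_bind, Part.mem_bind_iff,
      Part.mem_map_iff, PFun.coe_val]
    refine ⟨Nat.pair y, ⟨y, Part.mem_some y, rfl⟩, k₀, ?_, rfl⟩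
    refine Nat.mem_rfind.2 ?_
    constructor
    · simp only [PFun.coe_val, Part.map_eq_map, Part.mem_map_iff, Nat.unpair_pair]
      exact ⟨_, Part.mem_some _, by simp [hk₀]⟩
    · intro m hm
      simp only [PFun.coe_val, Part.map_eq_map, Part.mem_map_iff, Nat.unpair_pair]
      exact ⟨_, Part.mem_some _, by simp [hmin m hm]⟩
  · simp only [PFun.coe_val, Part.mem_some_iff, Nat.unpair_pair, pack]

end S7
namespace S7

theorem reduction (E Z : Set ℕ) (F : ℕ → ℕ) (Fa : ℕ → ℕ → ℕ)
    (hFce : CEIn (chi E) {x | F x = 1})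
    (hcomp : Computable fun p : ℕ × ℕ => Fa p.1 p.2)
    (hval : ∀ s x, Fa s x ≤ 1)
    (hlim : ∀ x, ∃ N, ∀ s ≥ N, Fa s x = F x)
    (h0 : ∀ x, Fa 0 x = 1)
    (hmon : ∀ x y s t, x < y → y < s → s < t → Fa s x ≠ Fa (s + 1) x → Fa s y = Fa t y)
    (Ut Vt : Set ℕ)
    (hUt : Ut = {m : ℕ | ∃ y t, m = Nat.pair y t ∧
      (∃ x s, x < y ∧ y < s ∧ Fa s x ≠ Fa (s + 1) x ∧ Fa s y = 1 ∧ Fa t y = 1) ∧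
      Fa (t + 1) y = 0})
    (hVt : Vt = {m : ℕ | ∃ y t, m = Nat.pair y t ∧
      (∃ s > t, Fa s y = 1 ∧ Fa t y = 1) ∧ Fa (t + 1) y = 0})
    (hUZ : Ut ⊆ Z) (hZV : Z ⊆ Vt) :
    RecursiveInFn (chi (join E Z)) ↑(chi {x | F x = 1}) := by
  classical
  set O : ℕ → ℕ := chi (join E Z) with hO
  set T : ℕ → List ℕ := fun k => (List.range k).map O with hT
  have e1 : ∀ y k, (pack O y k).unpair.1.unpair.1 = y := by
    intro y k; simp [pack, Nat.unpair_pair]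
  have e2 : ∀ y k, (pack O y k).unpair.1.unpair.2 = k := by
    intro y k; simp [pack, Nat.unpair_pair]
  have e3 : ∀ y k, Denumerable.ofNat (List ℕ) ((pack O y k)).unpair.2 = T k := by
    intro y k
    simp only [pack, Nat.unpair_pair, tabf, hT]
    exact Denumerable.ofNat_encode _
  have hchiF : ∀ y, chi {x | F x = 1} y = F y := by
    intro y
    rcases F01 (F := F) hval hlim y with h | h
    · have hy : y ∉ {x | F x = 1} := by simp [h]
      rw [chi_eq_zero.2 hy, h]
    · have hy : y ∈ {x | F x = 1} := by simp [h]
      rw [chi_eq_one.2 hy, h]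
  have hOE : RecursiveInFn O ↑(chi E) := by
    have hdbl : Computable fun n : ℕ => 2 * n :=
      (Primrec.nat_mul.to_comp.comp (Computable.const 2) Computable.id).of_eq fun _ => rfl
    refine recIn_of_eq (recIn_totalComp .oracle (recIn_of_computable hdbl)) fun n => ?_
    simp only [PFun.coe_val, Part.some_inj]
    by_cases h : n ∈ E
    · rw [hO]
      rw [chi_eq_one.2 ((join_even n).2 h), chi_eq_one.2 h]
    · rw [hO]
      rw [chi_eq_zero.2 (fun hj => h ((join_even n).1 hj)), chi_eq_zero.2 h]
  obtain ⟨f, hfRec, hfDom⟩ := hFce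
  have hOf : RecursiveInFn O f := recIn_trans hfRec hOE
  obtain ⟨c, hc⟩ := exists_code hOf
  have htabinv : ∀ {k i x : ℕ}, (T k)[i]? = some x → x = O i := by
    intro k i x h
    exact tab_get_inv (by simpa [hT] using h)
  have hev_sound : ∀ w k v, evln k (T k) c w = some v → F w = 1 := by
    intro w k v h
    have hm : v ∈ evalo O c w := evln_sound (fun i x hx => htabinv hx) c w v h
    rw [hc] at hm
    have hw : w ∈ {x | F x = 1} := (hfDom w).2 (Part.dom_iff_mem.2 ⟨v, hm⟩)
    simpa using hw
  have hev_term : ∀ w, F w = 1 → ∃ N, ∀ k, k ≥ N → (evln k (T k) c w).isSome = true := by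
    intro w hw
    have hdom : (f w).Dom := (hfDom w).1 (by simpa using hw)
    obtain ⟨v, hv⟩ := Part.dom_iff_mem.1 hdom
    rw [← hc] at hv
    obtain ⟨N, hN⟩ := evln_complete hv
    refine ⟨N, fun k hk => ?_⟩
    simp only [hT]
    rw [hN k hk]
    rfl
  have hZbit0 : ∀ p, p ∉ Z → O (2 * p + 1) = 0 := by
    intro p hp
    rw [hO]
    exact chi_eq_zero.2 fun hj => hp ((join_odd p).1 hj)
  have hZbit1 : ∀ {p k : ℕ}, (T k)[(2 * p + 1)]? = some 0 → p ∉ Z := by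
    intro p k h hpZ
    have h0' := htabinv h
    have h1' : O (2 * p + 1) = 1 := by
      rw [hO]; exact chi_eq_one.2 ((join_odd p).2 hpZ)
    omega
  have hexb : ∀ (L : List ℕ) (y t : ℕ), exb Fa L y t = true ↔
      Fa t y = 1 ∧ Fa (t + 1) y = 0 ∧ L[(2 * Nat.pair y t + 1)]? = some 0 := by
    intro L y t
    simp [exb, Bool.and_eq_true, decide_eq_true_eq, and_assoc]
  by_cases hG : ∀ b : ℕ, ∃ w t, b < w ∧ F w = 1 ∧ Fa t w = 1 ∧ Fa (t + 1) w = 0 ∧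
      Nat.pair w t ∉ Z
  · -- Case A : unboundedly many exposed true checkpoints
    have hterm : ∀ y, ∃ k, qaB Fa c (pack O y k) = 0 := by
      intro y
      obtain ⟨w, t, hyw, hFw, hx1, hx2, hxZ⟩ := hG y
      obtain ⟨N, hN⟩ := hev_term w hFw
      refine ⟨max N (max (w + 1) (2 * Nat.pair w t + 2)), ?_⟩
      set k := max N (max (w + 1) (2 * Nat.pair w t + 2)) with hk
      have hb1 : N ≤ k := le_max_left _ _
      have hb2 : w + 1 ≤ k := le_trans (le_max_left _ _) (le_max_right _ _)
      have hb3 : 2 * Nat.pair w t + 2 ≤ k := le_trans (le_max_right _ _) (le_max_right _ _)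
      have htk : t < k := by
        have := Nat.right_le_pair w t
        omega
      have hexbt : exb Fa (T k) w t = true := by
        rw [hexb]
        refine ⟨hx1, hx2, ?_⟩
        simp only [hT]
        rw [tab_get (show 2 * Nat.pair w t + 1 < k by omega)]
        rw [hZbit0 _ hxZ]
      have hlex : lwB (exb Fa (T k) w) k < k := lwB_lt_iff.2 ⟨t, htk, hexbt⟩
      have hpaw : paB Fa c (T k) k y w = true := by
        simp only [paB, Bool.and_eq_true, decide_eq_true_eq]
        exact ⟨⟨hyw, hN k hb1⟩, hlex⟩
      have hfire : lwB (paB Fa c (T k) k y) k < k :=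
        lwB_lt_iff.2 ⟨w, by omega, hpaw⟩
      simp only [qaB, e1, e2, e3]
      rw [if_pos hfire]
    have hsound : ∀ y k, qaB Fa c (pack O y k) = 0 →
        eaB Fa c (pack O y k) = chi {x | F x = 1} y := by
      intro y k h
      simp only [qaB, e1, e2, e3] at h
      have hcond : lwB (paB Fa c (T k) k y) k < k := by
        by_contra hcnd
        rw [if_neg hcnd] at h
        omega
      have hpa := lwB_spec hcond
      simp only [paB, Bool.and_eq_true, decide_eq_true_eq] at hpa
      obtain ⟨⟨hyw, hsome⟩, hlex⟩ := hpa
      obtain ⟨v, hv⟩ := Option.isSome_iff_exists.1 hsome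
      have hFw : F (lwB (paB Fa c (T k) k y) k) = 1 := hev_sound _ k v hv
      have hext := lwB_spec hlex
      rw [hexb] at hext
      obtain ⟨hx1, hx2, hbit⟩ := hext
      have hxZ : Nat.pair (lwB (paB Fa c (T k) k y) k)
          (lwB (exb Fa (T k) (lwB (paB Fa c (T k) k y) k)) k) ∉ Z := hZbit1 hbit
      have hread := hole_read (Z := Z) hlim hmon hUt hUZ hxZ hx1 hx2 hFw y hyw
      simp only [eaB, e1, e2, e3]
      rw [hchiF y, hread]
    have hrc := recIn_composite (O := O) (comp_qaB hcomp c) (comp_eaB hcomp c)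
    refine recIn_of_eq hrc fun y => ?_
    obtain ⟨k, hk0, hkeq⟩ := composite_eval O _ _ y (hterm y)
    rw [hkeq, PFun.coe_val, hsound y k hk0]
  · -- Case B : checkpoints bounded
    push_neg at hG
    obtain ⟨b, hb⟩ := hG
    have hterm : ∀ y, ∃ k, qbB Fa c (pack O y k) = 0 := by
      intro y
      rcases F01 (F := F) hval hlim y with hFy | hFy
      · obtain ⟨t, ht1, ht2, htZ⟩ := last_exit (Z := Z) hval hlim h0 hVt hZV hFy
        refine ⟨max (t + 1) (2 * Nat.pair y t + 2), ?_⟩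
        set k := max (t + 1) (2 * Nat.pair y t + 2) with hk
        have hb1 : t + 1 ≤ k := le_max_left _ _
        have hb2 : 2 * Nat.pair y t + 2 ≤ k := le_max_right _ _
        have hexbt : exb Fa (T k) y t = true := by
          rw [hexb]
          refine ⟨ht1, ht2, ?_⟩
          simp only [hT]
          rw [tab_get (show 2 * Nat.pair y t + 1 < k by omega)]
          rw [hZbit0 _ htZ]
        have hfire : lwB (exb Fa (T k) y) k < k := lwB_lt_iff.2 ⟨t, by omega, hexbt⟩
        simp only [qbB, e1, e2, e3]
        rw [if_pos (Or.inl hfire)]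
      · obtain ⟨N, hN⟩ := hev_term y hFy
        refine ⟨N, ?_⟩
        simp only [qbB, e1, e2, e3]
        rw [if_pos (Or.inr (hN N (le_refl N)))]
    have hsound : ∀ y k, b < y → qbB Fa c (pack O y k) = 0 →
        ebB Fa c (pack O y k) = chi {x | F x = 1} y := by
      intro y k hby h
      simp only [qbB, e1, e2, e3] at h
      simp only [ebB, e1, e2, e3]
      rw [hchiF y]
      by_cases hf0 : lwB (exb Fa (T k) y) k < k
      · rw [if_pos hf0]
        have hext := lwB_spec hf0
        rw [hexb] at hext
        obtain ⟨hx1, hx2, hbit⟩ := hext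
        have hxZ : Nat.pair y (lwB (exb Fa (T k) y) k) ∉ Z := hZbit1 hbit
        rcases F01 (F := F) hval hlim y with hFy | hFy
        · rw [hFy]
        · exact absurd (hb y _ hby hFy hx1 hx2) hxZ
      · rw [if_neg hf0]
        have hcond : lwB (exb Fa (T k) y) k < k ∨ (evln k (T k) c y).isSome = true := by
          by_contra hcnd
          rw [if_neg hcnd] at h
          omega
        have hsome := hcond.resolve_left hf0
        obtain ⟨v, hv⟩ := Option.isSome_iff_exists.1 hsome
        rw [hev_sound y k v hv]
    have hgB := recIn_composite (O := O) (comp_qbB hcomp c) (comp_ebB hcomp c)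
    have hlook : ∀ m, m ≤ b →
        ((List.range (b + 1)).map (chi {x | F x = 1})).getD m 0 = chi {x | F x = 1} m := by
      intro m hm
      rw [List.getD_eq_getElem?_getD, List.getElem?_map, List.getElem?_range (by omega)]
      rfl
    have hpatchc : Computable fun m : ℕ =>
        if m.unpair.1 ≤ b then ((List.range (b + 1)).map (chi {x | F x = 1})).getD m.unpair.1 0
        else m.unpair.2 := by
      have c1 : Computable fun m : ℕ => m.unpair.1 := Computable.fst.comp Computable.unpair
      have c2 : Computable fun m : ℕ => m.unpair.2 := Computable.snd.comp Computable.unpair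
      have hcnd : Computable fun m : ℕ => decide (m.unpair.1 ≤ b) :=
        (Primrec.nat_le.decide.to_comp.comp c1 (Computable.const b)).of_eq fun _ => rfl
      have hgd : Computable fun m : ℕ =>
          ((List.range (b + 1)).map (chi {x | F x = 1})).getD m.unpair.1 0 :=
        ((Primrec.list_getD 0).to_comp.comp (Computable.const _) c1).of_eq fun _ => rfl
      have hc := Computable.cond hcnd hgd c2
      refine hc.of_eq fun m => ?_
      by_cases h : m.unpair.1 ≤ b <;> simp [h]
    have hfin := RecursiveInFn.comp (recIn_of_computable hpatchc)
      (RecursiveInFn.pair (recIn_of_computable Computable.id) hgB)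
    refine recIn_of_eq hfin fun y => ?_
    obtain ⟨k, hk0, hkeq⟩ := composite_eval O _ _ y (hterm y)
    show (Nat.pair <$> _ <*> _) >>= _ = _
    rw [hkeq]
    simp only [Seq.seq, PFun.coe_val, Part.map_eq_map, Part.map_some, Part.bind_eq_bind,
      Part.bind_some, Part.some_inj, Nat.unpair_pair, id_eq]
    rw [part_some_bind_pfun]
    simp only [PFun.coe_val, Part.some_inj, Nat.unpair_pair]
    by_cases hyb : y ≤ b
    · rw [if_pos hyb]
      exact hlook y hyb
    · rw [if_neg hyb]
      exact hsound y k (by omega) hk0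

end S7
theorem stmt7 (E : Set ℕ) (hE : CE E) (F : ℕ → ℕ) (Fa : ℕ → ℕ → ℕ)
    (hFce : CEIn (chi E) {x | F x = 1})
    (hcomp : Computable fun p : ℕ × ℕ => Fa p.1 p.2)
    (hval : ∀ s x, Fa s x ≤ 1)
    (hlim : ∀ x, ∃ N, ∀ s ≥ N, Fa s x = F x)
    (h0 : ∀ x, Fa 0 x = 1) (h1 : ∀ x, Fa 1 x = 0)
    (hmon : ∀ x y s t, x < y → y < s → s < t → Fa s x ≠ Fa (s + 1) x → Fa s y = Fa t y)
    (Ft Ut Vt : Set ℕ)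
    (hFt : Ft = {m : ℕ | ∃ y t, m = Nat.pair y t ∧
      Fa t y = 1 ∧ F y = 1 ∧ Fa (t + 1) y = 0})
    (hUt : Ut = {m : ℕ | ∃ y t, m = Nat.pair y t ∧
      (∃ x s, x < y ∧ y < s ∧ Fa s x ≠ Fa (s + 1) x ∧ Fa s y = 1 ∧ Fa t y = 1) ∧
      Fa (t + 1) y = 0})
    (hVt : Vt = {m : ℕ | ∃ y t, m = Nat.pair y t ∧
      (∃ s > t, Fa s y = 1 ∧ Fa t y = 1) ∧ Fa (t + 1) y = 0}) :
    CE Ut ∧ CE Vt ∧ Ut ⊆ Ft ∧ Ft ⊆ Vt ∧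
      ∀ Z : Set ℕ, Ut ⊆ Z → Z ⊆ Vt → SetTuringRed {x | F x = 1} (join E Z) := by
  refine ⟨S7.ce_Ut hcomp Ut hUt, S7.ce_Vt hcomp Vt hVt,
    S7.Ut_sub_Ft hlim hmon Ft Ut hFt hUt, S7.Ft_sub_Vt hlim Ft Vt hFt hVt,
    fun Z hUZ hZV => ?_⟩
  exact S7.reduction E Z F Fa hFce hcomp hval hlim h0 hmon Ut Vt hUt hVt hUZ hZV
end
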